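/- If w_1, ..., w_k are elements of a basis of ℤ^n (k ≤ n) and the mod 2 reduction of w_i equals the i-th standard basis vector of (ℤ/2)^n for each i, then {w_1,...,w_k} extends to a basis {w_1,...,w_n} of ℤ^n lying in the Γ_n[2]-orbit of the standard basis. -/

import Mathlib

open Matrix

private lemma zmod2_cast_val (a : ZMod 2) : ((a.val : ℤ) : ZMod 2) = a := by
  revert a; decide

private lemma zmod2_ne_zero {a : ZMod 2} (h : a ≠ 0) : a = 1 := by
  revert a; decide

/-- Any matrix over `ZMod 2` with nonzero determinant lifts to an integer matrix
with unit determinant. -/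
private lemma exists_int_lift {m : Type} [DecidableEq m] [Fintype m]
    (Q : Matrix m m (ZMod 2)) (hQ : Q.det ≠ 0) :
    ∃ S : Matrix m m ℤ, IsUnit S.det ∧ S.map (Int.cast : ℤ → ZMod 2) = Q := by
  haveI : Fact (Nat.Prime 2) := ⟨Nat.prime_two⟩
  apply Matrix.diagonal_transvection_induction_of_det_ne_zero _ Q hQ
  · intro D hD
    have hD1 : D = fun _ => 1 := by
      funext i
      refine zmod2_ne_zero fun h => hD ?_
      rw [det_diagonal]
      exact Finset.prod_eq_zero (Finset.mem_univ i) h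
    refine ⟨1, by simp, ?_⟩
    rw [hD1, ← Matrix.diagonal_one]
    ext i j
    by_cases h : i = j <;> simp [Matrix.diagonal_apply, h]
  · intro t
    refine ⟨Matrix.transvection t.i t.j ((t.c.val : ℤ)),
      by rw [Matrix.det_transvection_of_ne _ _ t.hij]; exact isUnit_one, ?_⟩
    rcases t with ⟨i, j, hij, c⟩
    rw [Matrix.TransvectionStruct.toMatrix_mk, Matrix.transvection, Matrix.transvection]
    ext a b
    by_cases h : a = b <;>
      simp [Matrix.single, Matrix.one_apply, h, apply_ite (Int.cast : ℤ → ZMod 2),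
        zmod2_cast_val]
  · rintro A B _ _ ⟨SA, hSA, rfl⟩ ⟨SB, hSB, rfl⟩
    refine ⟨SA * SB, by rw [det_mul]; exact hSA.mul hSB, ?_⟩
    ext i j
    simp only [Matrix.map_apply, Matrix.mul_apply]
    push_cast
    rfl

/-- The principal level 2 congruence subgroup of `GL(n, ℤ)`. -/
def congruence2 (n : ℕ) : Subgroup (GL (Fin n) ℤ) :=
  (Matrix.GeneralLinearGroup.map (Int.castRingHom (ZMod 2))).ker

/-- A partial π-basis `w_1, …, w_k` of `ℤⁿ` (members of some basis of `ℤⁿ`,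
with `w_i` reducing mod 2 to the `i`-th standard basis vector) extends to a
basis of `ℤⁿ` in the `Γ_n[2]`-orbit of the standard basis: there is
`M ∈ Γ_n[2]` whose `i`-th column is `w_i` for `i ≤ k`. -/
theorem partial_pi_basis_extends {n k : ℕ} (hk : k ≤ n)
    (w : Fin k → (Fin n → ℤ))
    (hpartial : ∃ b : Module.Basis (Fin n) ℤ (Fin n → ℤ),
      ∀ i : Fin k, ∃ j : Fin n, b j = w i)
    (hmod2 : ∀ (i : Fin k) (j : Fin n),
      ((w i j : ZMod 2)) = if (j : ℕ) = (i : ℕ) then 1 else 0) :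
    ∃ M ∈ congruence2 n,
      ∀ i : Fin k,
        (fun j => (M : Matrix (Fin n) (Fin n) ℤ) j (Fin.castLE hk i)) = w i := by
  classical
  haveI : Fact (Nat.Prime 2) := ⟨Nat.prime_two⟩
  obtain ⟨b, hb⟩ := hpartial
  choose f hf using hb
  -- `w` is injective
  have hwinj : Function.Injective w := by
    intro i₁ i₂ h
    by_contra hne
    have h1 := hmod2 i₁ (Fin.castLE hk i₁)
    have h2 := hmod2 i₂ (Fin.castLE hk i₁)
    rw [h] at h1
    have e1 : ((Fin.castLE hk i₁ : Fin n) : ℕ) = (i₁ : ℕ) := rfl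
    rw [e1, if_pos rfl] at h1
    rw [e1, if_neg (fun hc => hne (Fin.ext hc))] at h2
    exact one_ne_zero (h1.symm.trans h2)
  have hfinj : Function.Injective f := by
    intro i₁ i₂ h
    exact hwinj ((hf i₁).symm.trans (h ▸ hf i₂))
  have hcastinj : Function.Injective (Fin.castLE hk) := Fin.castLE_injective hk
  -- build a permutation σ of `Fin n` with `σ (f i) = castLE i`
  have hcard : Fintype.card ((Set.range f)ᶜ : Set (Fin n)) =
      Fintype.card ((Set.range (Fin.castLE hk))ᶜ : Set (Fin n)) := by
    rw [Fintype.card_compl_set, Fintype.card_compl_set,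
      Set.card_range_of_injective hfinj, Set.card_range_of_injective hcastinj]
  let ecompl := Fintype.equivOfCardEq hcard
  let e₁ : Fin k ≃ Set.range f := Equiv.ofInjective f hfinj
  let e₂ : Fin k ≃ Set.range (Fin.castLE hk) := Equiv.ofInjective _ hcastinj
  let σ : Equiv.Perm (Fin n) :=
    ((Equiv.Set.sumCompl (Set.range f)).symm.trans
      (Equiv.sumCongr (e₁.symm.trans e₂) ecompl)).trans
      (Equiv.Set.sumCompl (Set.range (Fin.castLE hk)))
  have hσ : ∀ i, σ (f i) = Fin.castLE hk i := by
    intro i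
    have h1 : (Equiv.Set.sumCompl (Set.range f)).symm (f i) =
        Sum.inl ⟨f i, Set.mem_range_self i⟩ :=
      Equiv.Set.sumCompl_symm_apply_of_mem (Set.mem_range_self i)
    have h2 : e₁.symm ⟨f i, Set.mem_range_self i⟩ = i := by
      have : (⟨f i, Set.mem_range_self i⟩ : Set.range f) = e₁ i := rfl
      rw [this, Equiv.symm_apply_apply]
    simp only [σ, Equiv.trans_apply, h1, Equiv.sumCongr_apply, Sum.map_inl, Equiv.trans_apply, h2]
    rfl
  -- the reindexed basis: `c (castLE i) = w i`
  let c : Module.Basis (Fin n) ℤ (Fin n → ℤ) := b.reindex σ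
  have hc : ∀ i : Fin k, c (Fin.castLE hk i) = w i := by
    intro i
    have : σ.symm (Fin.castLE hk i) = f i := by
      rw [Equiv.symm_apply_eq, hσ]
    rw [Module.Basis.reindex_apply, this, hf]
  -- the matrix with columns `c j`
  let A : Matrix (Fin n) (Fin n) ℤ := Matrix.of fun r j => c j r
  have hA : A = (Pi.basisFun ℤ (Fin n)).toMatrix ⇑c := by
    ext r j
    rw [Module.Basis.toMatrix_apply, Pi.basisFun_repr]
    rfl
  have hAdet : IsUnit A.det := by
    rw [hA]
    haveI := (Pi.basisFun ℤ (Fin n)).invertibleToMatrix c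
    exact Matrix.isUnit_det_of_invertible _
  -- its mod-2 reduction
  let Abar : Matrix (Fin n) (Fin n) (ZMod 2) := A.map (Int.cast : ℤ → ZMod 2)
  have hAbar_det : IsUnit Abar.det := by
    have h := hAdet.map (Int.castRingHom (ZMod 2))
    rw [RingHom.map_det] at h
    simpa using h
  have hAbar_col : ∀ (i : Fin k) (j : Fin n),
      Abar j (Fin.castLE hk i) = if j = Fin.castLE hk i then 1 else 0 := by
    intro i j
    have : Abar j (Fin.castLE hk i) = ((w i j : ℤ) : ZMod 2) := by
      simp only [Abar, Matrix.map_apply, A, Matrix.of_apply, hc]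
    rw [this, hmod2]
    congr 1
    simp [Fin.ext_iff, eq_comm]
  -- the inverse mod 2; it has the same standard first `k` columns
  let B : Matrix (Fin n) (Fin n) (ZMod 2) := Abar⁻¹
  have hBA : B * Abar = 1 := Matrix.nonsing_inv_mul _ hAbar_det
  have hAB : Abar * B = 1 := Matrix.mul_nonsing_inv _ hAbar_det
  have hBdet : B.det ≠ 0 := by
    have : B.det * Abar.det = 1 := by rw [← det_mul, hBA, det_one]
    exact left_ne_zero_of_mul_eq_one this
  have hBcol : ∀ (i : Fin k) (j : Fin n),
      B j (Fin.castLE hk i) = if j = Fin.castLE hk i then 1 else 0 := by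
    intro i j
    have : B j (Fin.castLE hk i) = (B * Abar) j (Fin.castLE hk i) := by
      rw [Matrix.mul_apply, Finset.sum_eq_single (Fin.castLE hk i)]
      · rw [hAbar_col, if_pos rfl, mul_one]
      · intro l _ hl
        rw [hAbar_col, if_neg hl, mul_zero]
      · simp
    rw [this, hBA, Matrix.one_apply]
  -- index the blocks
  have hnk : k + (n - k) = n := by omega
  let e : Fin k ⊕ Fin (n - k) ≃ Fin n := finSumFinEquiv.trans (finCongr hnk)
  have he : ∀ i : Fin k, e (Sum.inl i) = Fin.castLE hk i := by
    intro i; apply Fin.ext; simp [e]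
  have hesymm : ∀ i : Fin k, e.symm (Fin.castLE hk i) = Sum.inl i := by
    intro i; rw [Equiv.symm_apply_eq, he]
  -- B, reindexed along e, is block upper triangular with identity upper-left block
  let P2 : Matrix (Fin k) (Fin (n - k)) (ZMod 2) :=
    Matrix.of fun x y => B (e (Sum.inl x)) (e (Sum.inr y))
  let Q2 : Matrix (Fin (n - k)) (Fin (n - k)) (ZMod 2) :=
    Matrix.of fun x y => B (e (Sum.inr x)) (e (Sum.inr y))
  have hB' : B.submatrix e e = Matrix.fromBlocks 1 P2 0 Q2 := by
    ext x y
    rcases x with x | x <;> rcases y with y | y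
    · rw [Matrix.submatrix_apply, Matrix.fromBlocks_apply₁₁,
        show e (Sum.inl y) = Fin.castLE hk y from he y, hBcol, Matrix.one_apply]
      simp [he, Fin.ext_iff]
    · rfl
    · rw [Matrix.submatrix_apply, Matrix.fromBlocks_apply₂₁,
        show e (Sum.inl y) = Fin.castLE hk y from he y, hBcol, if_neg, Matrix.zero_apply]
      rw [← he y, e.apply_eq_iff_eq]
      simp
    · rfl
  have hQ2det : Q2.det ≠ 0 := by
    have := Matrix.det_submatrix_equiv_self e B
    rw [hB', Matrix.det_fromBlocks_zero₂₁, det_one, one_mul] at this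
    rw [this]
    exact hBdet
  -- integer lift of the lower-right block of B
  obtain ⟨S, hSdet, hSmap⟩ := exists_int_lift Q2 hQ2det
  -- the correcting integer matrix U
  let P2' : Matrix (Fin k) (Fin (n - k)) ℤ := Matrix.of fun x y => ((P2 x y).val : ℤ)
  let U : Matrix (Fin n) (Fin n) ℤ :=
    (Matrix.fromBlocks 1 P2' 0 S).submatrix e.symm e.symm
  have hUdet : IsUnit U.det := by
    show IsUnit ((Matrix.fromBlocks 1 P2' 0 S).submatrix e.symm e.symm).det
    rw [Matrix.det_submatrix_equiv_self, Matrix.det_fromBlocks_zero₂₁, det_one, one_mul]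
    exact hSdet
  have hUmap : U.map (Int.cast : ℤ → ZMod 2) = B := by
    have h0 : U.map (Int.cast : ℤ → ZMod 2) =
        ((Matrix.fromBlocks 1 P2' 0 S).map (Int.cast : ℤ → ZMod 2)).submatrix e.symm e.symm := rfl
    have h1 : (1 : Matrix (Fin k) (Fin k) ℤ).map (Int.cast : ℤ → ZMod 2) = 1 :=
      Matrix.map_one _ (by simp) (by simp)
    have hz : (0 : Matrix (Fin (n - k)) (Fin k) ℤ).map (Int.cast : ℤ → ZMod 2) = 0 :=
      Matrix.map_zero _ (by simp)
    have h2 : P2'.map (Int.cast : ℤ → ZMod 2) = P2 := by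
      ext x y
      exact zmod2_cast_val _
    rw [h0, Matrix.fromBlocks_map, h1, hz, h2, hSmap, ← hB',
      Matrix.submatrix_submatrix, Equiv.self_comp_symm, Matrix.submatrix_id_id]
  have hUcol : ∀ (i : Fin k) (j : Fin n),
      U j (Fin.castLE hk i) = if j = Fin.castLE hk i then 1 else 0 := by
    intro i j
    have h0 : U j (Fin.castLE hk i) =
        (Matrix.fromBlocks 1 P2' 0 S) (e.symm j) (Sum.inl i) := by
      show ((Matrix.fromBlocks 1 P2' 0 S).submatrix e.symm e.symm) j (Fin.castLE hk i) = _
      rw [Matrix.submatrix_apply, hesymm]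
    rw [h0]
    rcases hx : e.symm j with x | x
    · rw [Matrix.fromBlocks_apply₁₁, Matrix.one_apply]
      have hj : j = e (Sum.inl x) := by rw [← hx, Equiv.apply_symm_apply]
      subst hj
      simp [he, Fin.ext_iff]
    · rw [Matrix.fromBlocks_apply₂₁, Matrix.zero_apply]
      refine (if_neg fun h => ?_).symm
      rw [h, hesymm] at hx
      exact Sum.inl_ne_inr hx
  -- the final matrix
  let M : Matrix (Fin n) (Fin n) ℤ := A * U
  have hMunit : IsUnit M := by
    rw [Matrix.isUnit_iff_isUnit_det, det_mul]
    exact hAdet.mul hUdet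
  refine ⟨hMunit.unit, ?_, ?_⟩
  · rw [congruence2, MonoidHom.mem_ker]
    apply Units.ext
    show (hMunit.unit.val).map (Int.castRingHom (ZMod 2)) = 1
    rw [IsUnit.unit_spec]
    show M.map (Int.cast : ℤ → ZMod 2) = 1
    have : M.map (Int.cast : ℤ → ZMod 2) = Abar * (U.map (Int.cast : ℤ → ZMod 2)) := by
      show (A * U).map (Int.cast : ℤ → ZMod 2) = _
      exact Matrix.map_mul (f := Int.castRingHom (ZMod 2))
    rw [this, hUmap, hAB]
  · intro i
    funext j
    show (hMunit.unit.val) j (Fin.castLE hk i) = w i j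
    rw [IsUnit.unit_spec]
    show (A * U) j (Fin.castLE hk i) = w i j
    rw [Matrix.mul_apply, Finset.sum_eq_single (Fin.castLE hk i)]
    · rw [hUcol, if_pos rfl, mul_one]
      show c (Fin.castLE hk i) j = w i j
      rw [hc]
    · intro l _ hl
      rw [hUcol, if_neg hl, mul_zero]
    · simp
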